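/- Let A : f = 0 be an arrangement of d > 1 distinct lines in ℙ², not all passing through one point, and let m(A) ≥ 2 denote the maximal number of lines of A passing through a single point. Then mdr(f) ≤ d − m(A) ≤ d − 2. In particular, there is no line arrangement of d > 1 lines which is a maximal Tjurina curve of type (d, d−1). -/

import Mathlib

open MvPolynomial

noncomputable section

/-- The polynomial ring `S = ℂ[x,y,z]`. -/
abbrev S : Type := MvPolynomial (Fin 3) ℂ

/-- The linear map `(a,b,c) ↦ a fₓ + b f_y + c f_z`. -/
noncomputable def jacMap (f : S) : (Fin 3 → S) →ₗ[S] S :=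
  Fintype.linearCombination S (fun i => pderiv i f)

/-- The module `AR(f)` of Jacobian syzygies of `f`. -/
def AR (f : S) : Submodule S (Fin 3 → S) := LinearMap.ker (jacMap f)

/-- The Jacobian ideal `J_f = (fₓ, f_y, f_z)`. -/
def jacobianIdeal (f : S) : Ideal S := Ideal.span (Set.range fun i : Fin 3 => pderiv i f)

/-- `dim_ℂ M(f)_k`, the dimension of the degree-`k` piece of the Milnor algebra `S/J_f`,
computed as `dim (S_k / (J_f ∩ S_k))`. -/
noncomputable def milnorDim (f : S) (k : ℕ) : ℕ :=
  Module.finrank ℂ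
    (↥(homogeneousSubmodule (Fin 3) ℂ k) ⧸
      (Submodule.comap (homogeneousSubmodule (Fin 3) ℂ k).subtype
        (Submodule.restrictScalars ℂ (jacobianIdeal f))))

/-- `mdr(f)`: the minimal degree of a nonzero homogeneous Jacobian syzygy. -/
noncomputable def mdr (f : S) : ℕ :=
  sInf {k | ∃ a : Fin 3 → S, a ∈ AR f ∧ a ≠ 0 ∧ ∀ i, (a i).IsHomogeneous k}

/-- `g` is a homogeneous generating family of `AR(f)` with degrees `D`. -/
def HomGen (f : S) {m : ℕ} (g : Fin m → (Fin 3 → S)) (D : Fin m → ℕ) : Prop :=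
  (∀ j, g j ∈ AR f) ∧ (∀ j i, ((g j) i).IsHomogeneous (D j)) ∧
    Submodule.span S (Set.range g) = AR f

/-- `C : f = 0` is an `m`-syzygy curve with exponents `D`. -/
def IsMSyzygy (f : S) (m : ℕ) (D : Fin m → ℕ) : Prop :=
  (∃ g, HomGen f g D) ∧
    ∀ (m' : ℕ) (g' : Fin m' → (Fin 3 → S)) (D' : Fin m' → ℕ), HomGen f g' D' → m ≤ m'

/-- du Plessis–Wall bound `τ(d,r)_max` for `d/2 ≤ r ≤ d-1`. -/
def tauMax (d r : ℤ) : ℤ := (d-1)*(d-r-1) + r^2 - (2*r-d+2)*(2*r-d+1)/2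

/-- `p` is a singular point of the curve `f = 0`. -/
def IsSingAt (f : S) (p : Fin 3 → ℂ) : Prop := ∀ i, eval p (pderiv i f) = 0

/-- `p` is an ordinary node: a singular point where the Hessian matrix has rank 2,
i.e. the quadratic part of a local affine equation is nondegenerate. -/
def IsNodeAt (f : S) (p : Fin 3 → ℂ) : Prop :=
  IsSingAt f p ∧ (Matrix.of fun i j : Fin 3 => eval p (pderiv i (pderiv j f))).rank = 2

/-- The singular locus of `f = 0` as a set of points of `ℙ²`. -/
def SingLocus (f : S) : Set (Projectivization ℂ (Fin 3 → ℂ)) :=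
  {P | IsSingAt f P.rep}

/-- The linear form with coefficient vector `v`. -/
def linForm (v : Fin 3 → ℂ) : S := ∑ i, C (v i) * X i

/-- `T(k)`: the coefficient of `t^k` in `((1-t^(d-1))/(1-t))³`, i.e. the Hilbert
function of the Milnor algebra of a smooth curve of degree `d`. -/
noncomputable def Tcoef (d k : ℕ) : ℚ :=
  PowerSeries.coeff k ((((1 : PowerSeries ℚ) - PowerSeries.X ^ (d-1)) * ((1 : PowerSeries ℚ) - PowerSeries.X)⁻¹) ^ 3)


/-- `B(n) = n(n-1)/2`, the binomial coefficient "n choose 2" as a polynomial in `n ∈ ℤ`. -/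
def binom2 (n : ℤ) : ℤ := n * (n - 1) / 2


lemma pderiv_linForm (w : Fin 3 → ℂ) (i : Fin 3) : pderiv i (linForm w) = C (w i) := by
  unfold linForm
  rw [map_sum]
  simp [pderiv_X, Pi.single_apply, eq_comm]

lemma pderiv_prod {ι : Type*} [DecidableEq ι] (T : Finset ι) (F : ι → S) (i : Fin 3) :
    pderiv i (∏ j ∈ T, F j) = ∑ j ∈ T, pderiv i (F j) * ∏ k ∈ T.erase j, F k := by
  induction T using Finset.induction_on with
  | empty => simp
  | insert b T ha ih =>
    rw [Finset.prod_insert ha, pderiv_mul, Finset.sum_insert ha, Finset.erase_insert ha, ih,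
      Finset.mul_sum]
    congr 1
    apply Finset.sum_congr rfl
    intro j hj
    have hbj : b ≠ j := fun hh => ha (hh ▸ hj)
    rw [Finset.erase_insert_of_ne hbj,
      Finset.prod_insert (fun hh => ha (Finset.mem_of_mem_erase hh))]
    ring

def Dp (p : Fin 3 → ℂ) (s : S) : S := ∑ i, C (p i) * pderiv i s

lemma Dp_prod (p : Fin 3 → ℂ) {ι : Type*} [DecidableEq ι] (T : Finset ι) (w : ι → Fin 3 → ℂ) :
    Dp p (∏ j ∈ T, linForm (w j)) =
      ∑ j ∈ T, C (∑ i, w j i * p i) * ∏ k ∈ T.erase j, linForm (w k) := by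
  unfold Dp
  simp only [pderiv_prod, Finset.mul_sum, pderiv_linForm]
  rw [Finset.sum_comm]
  apply Finset.sum_congr rfl
  intro j _
  rw [map_sum, Finset.sum_mul]
  apply Finset.sum_congr rfl
  intro i _
  rw [C_mul]
  ring

lemma euler_prod {ι : Type*} [DecidableEq ι] (T : Finset ι) (w : ι → Fin 3 → ℂ) :
    ∑ i, X i * pderiv i (∏ j ∈ T, linForm (w j)) = (T.card : S) * ∏ j ∈ T, linForm (w j) := by
  simp only [pderiv_prod, Finset.mul_sum, pderiv_linForm]
  rw [Finset.sum_comm]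
  have : ∀ j ∈ T, (∑ i, X i * (C (w j i) * ∏ k ∈ T.erase j, linForm (w k)))
      = ∏ k ∈ T, linForm (w k) := by
    intro j hj
    rw [← Finset.mul_prod_erase T _ hj]
    unfold linForm
    rw [Finset.sum_mul]
    apply Finset.sum_congr rfl
    intro i _
    ring
  rw [Finset.sum_congr rfl this, Finset.sum_const, nsmul_eq_mul]

lemma linForm_isHomogeneous (w : Fin 3 → ℂ) : (linForm w).IsHomogeneous 1 :=
  IsHomogeneous.sum _ _ 1 fun i _ => (isHomogeneous_X ℂ i).C_mul _

lemma prod_linForm_isHomogeneous {ι : Type*} (T : Finset ι) (w : ι → Fin 3 → ℂ) :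
    (∏ j ∈ T, linForm (w j)).IsHomogeneous T.card := by
  have := IsHomogeneous.prod T (fun j => linForm (w j)) (fun _ => 1)
    (fun j _ => linForm_isHomogeneous (w j))
  simpa using this

lemma eval_linForm (q w : Fin 3 → ℂ) : eval q (linForm w) = ∑ i, w i * q i := by
  simp [linForm]

lemma linForm_ne_zero {w : Fin 3 → ℂ} (hw : w ≠ 0) : linForm w ≠ 0 := by
  obtain ⟨i, hi⟩ := Function.ne_iff.mp hw
  intro hz
  have := congrArg (eval (Pi.single i 1)) hz
  rw [eval_linForm] at this
  simp [Pi.single_apply] at this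
  exact hi this


/-- Remark after Proposition 5: for an arrangement of `d > 1` lines, not
all through one point, with maximal multiplicity `mA ≥ 2` of a point, one has
`mdr(f) ≤ d - mA ≤ d - 2`; in particular no line arrangement is a maximal Tjurina curve of
type `(d, d-1)` (its `mdr` is never `d-1`). -/
theorem stmt13 (d mA : ℕ) (hd : 2 ≤ d) (v : Fin d → (Fin 3 → ℂ))
    (hv0 : ∀ j, v j ≠ 0)
    (hdist : ∀ j k, j ≠ k → ∀ c : ℂ, v j ≠ c • v k)
    (hnotall : ¬∃ p : Fin 3 → ℂ, p ≠ 0 ∧ ∀ j, ∑ i, v j i * p i = 0)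
    (hmA2 : 2 ≤ mA)
    (hmax : ∀ p : Fin 3 → ℂ, p ≠ 0 → {j : Fin d | ∑ i, v j i * p i = 0}.ncard ≤ mA)
    (hex : ∃ p : Fin 3 → ℂ, p ≠ 0 ∧ {j : Fin d | ∑ i, v j i * p i = 0}.ncard = mA)
    (f : S) (hf : f = ∏ j, linForm (v j)) :
    mdr f ≤ d - mA ∧ d - mA ≤ d - 2 ∧ mdr f ≠ d - 1 := by
  classical
  obtain ⟨p, hp0, hpcard⟩ := hex
  set T : Finset (Fin d) := Finset.univ.filter (fun j => ∑ i, v j i * p i = 0) with hT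
  have hTc : ∀ j, j ∈ T ↔ ∑ i, v j i * p i = 0 := by
    intro j; simp [hT]
  have hTcard : T.card = mA := by
    rw [← hpcard, Set.ncard_eq_toFinset_card']
    congr 1
    ext j
    simp [hT]
  have hTcc : Tᶜ.card = d - mA := by
    rw [Finset.card_compl, hTcard, Fintype.card_fin]
  set h : S := ∏ j ∈ Tᶜ, linForm (v j) with hh
  set e := Tᶜ.card with hecard
  have hTne : T ≠ Finset.univ := by
    intro hTu
    exact hnotall ⟨p, hp0, fun j => (hTc j).mp (hTu ▸ Finset.mem_univ j)⟩
  have he : 1 ≤ e := by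
    have h1 : T.card < Fintype.card (Fin d) :=
      Finset.card_lt_card (lt_of_le_of_ne (Finset.subset_univ T) hTne)
    rw [hecard, Finset.card_compl]
    rw [Fintype.card_fin] at h1 ⊢
    omega
  set Dh : S := Dp p h with hDh
  set a : Fin 3 → S := fun i => C ((d : ℂ) * p i) * h - Dh * X i with ha
  -- key identity
  have key : h * Dp p f = f * Dh := by
    have hfu : f = ∏ j, linForm (v j) := hf
    rw [hDh, hh, hfu, Dp_prod, Dp_prod]
    rw [← Finset.sum_add_sum_compl T]
    have hzero : ∑ j ∈ T, C (∑ i, v j i * p i) * ∏ k ∈ Finset.univ.erase j, linForm (v k)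
        = 0 := by
      apply Finset.sum_eq_zero
      intro j hj
      rw [(hTc j).mp hj, map_zero, zero_mul]
    rw [hzero, zero_add, Finset.mul_sum, Finset.mul_sum]
    apply Finset.sum_congr rfl
    intro j hj
    have h1 : linForm (v j) * ∏ k ∈ Finset.univ.erase j, linForm (v k)
        = ∏ k, linForm (v k) := Finset.mul_prod_erase Finset.univ (fun k => linForm (v k)) (Finset.mem_univ j)
    have h2 : linForm (v j) * ∏ k ∈ Tᶜ.erase j, linForm (v k)
        = ∏ k ∈ Tᶜ, linForm (v k) := Finset.mul_prod_erase Tᶜ (fun k => linForm (v k)) hj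
    rw [← h1, ← h2]
    ring
  have hEuler : ∑ i, X i * pderiv i f = (d : S) * f := by
    rw [hf, euler_prod, Finset.card_univ, Fintype.card_fin]
  have hmem : jacMap f a = 0 := by
    rw [jacMap, Fintype.linearCombination_apply]
    have step : ∑ i, a i • pderiv i f
        = C (d : ℂ) * (h * Dp p f) - Dh * ∑ i, X i * pderiv i f := by
      rw [Dp, Finset.mul_sum, Finset.mul_sum, Finset.mul_sum, ← Finset.sum_sub_distrib]
      apply Finset.sum_congr rfl
      intro i _
      simp only [ha, smul_eq_mul, C_mul]
      ring
    rw [step, hEuler, key, map_natCast C d]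
    ring
  -- homogeneity
  have hh1 : h.IsHomogeneous e := by
    rw [hh]
    exact prod_linForm_isHomogeneous Tᶜ v
  have hDh1 : Dh.IsHomogeneous (e - 1) := by
    rw [hDh, hh, Dp_prod]
    apply MvPolynomial.IsHomogeneous.sum
    intro j hj
    have hp1 := prod_linForm_isHomogeneous (Tᶜ.erase j) v
    rw [Finset.card_erase_of_mem hj] at hp1
    exact hp1.C_mul _
  have hhom : ∀ i, (a i).IsHomogeneous e := by
    intro i
    simp only [ha]
    apply MvPolynomial.IsHomogeneous.sub
    · exact hh1.C_mul _
    · have := hDh1.mul (isHomogeneous_X ℂ i)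
      rwa [Nat.sub_add_cancel he] at this
  -- nonzero
  have hane : a ≠ 0 := by
    intro h0
    obtain ⟨i0, hi0⟩ : ∃ i, p i ≠ 0 := by
      by_contra hc; push_neg at hc; exact hp0 (funext hc)
    have E : ∀ i, C (d : ℂ) * C (p i) * h = Dh * X i := by
      intro i
      have := congrFun h0 i
      simp only [ha, Pi.zero_apply, C_mul] at this
      exact sub_eq_zero.mp this
    obtain ⟨j, hij⟩ : ∃ j : Fin 3, i0 ≠ j := by
      refine ⟨if i0 = 0 then 1 else 0, ?_⟩
      split <;> simp_all
    have key2 : Dh * (C (p j) * X i0 - C (p i0) * X j) = 0 := by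
      have e1 := E i0
      have e2 := E j
      linear_combination C (p i0) * e2 - C (p j) * e1
    have hlin : (C (p j) * X i0 - C (p i0) * X j : S) ≠ 0 := by
      intro hz
      have := congrArg (eval (Pi.single j (1 : ℂ))) hz
      simp [Pi.single_apply, hij] at this
      exact hi0 this
    have hhne : h ≠ 0 := by
      rw [hh]
      exact Finset.prod_ne_zero_iff.mpr fun k _ => linForm_ne_zero (hv0 k)
    have hDh0 : Dh = 0 := (mul_eq_zero.mp key2).resolve_right hlin
    have := E i0
    rw [hDh0, zero_mul] at this
    rcases mul_eq_zero.mp this with hc | hc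
    · rw [← C_mul] at hc
      have hc' : (d : ℂ) * p i0 = 0 := C_eq_zero.mp hc
      have hd0 : (d : ℂ) ≠ 0 := Nat.cast_ne_zero.mpr (by omega)
      exact hi0 ((mul_eq_zero.mp hc').resolve_left hd0)
    · exact hhne hc
  have hle : mdr f ≤ e := Nat.sInf_le ⟨a, LinearMap.mem_ker.mpr hmem, hane, hhom⟩
  have hle' : mdr f ≤ d - mA := by rw [← hTcc]; exact hle
  exact ⟨hle', Nat.sub_le_sub_left hmA2 d, by omega⟩


end
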